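/- Let X be a finite pure d-dimensional homogeneous simplicial complex such that c(σ) = #{τ ∈ X(d) : σ ⊆ τ} is constant on X(i). If α ∈ C^i(X, F₂) is locally minimal, then for every vertex v, the localization α_v, viewed as a set of (i−1)-cells of the link X_v, satisfies |α_v| ≤ |X_v(i−1)|/2. -/

import Mathlib

open Finset

variable {V : Type*}

/-- The `i`-dimensional faces of `X` (faces with `i+1` vertices). -/
def faces [DecidableEq V] (X : Finset (Finset V)) (i : ℕ) : Finset (Finset V) :=
  X.filter fun s => s.card = i + 1

/-- `X` is a simplicial complex: it is closed under taking subsets. -/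
def IsComplex [DecidableEq V] (X : Finset (Finset V)) : Prop :=
  ∀ s ∈ X, ∀ t ⊆ s, t ∈ X

/-- `X` is pure of dimension `d`: every face is contained in a `d`-dimensional face. -/
def IsPure [DecidableEq V] (X : Finset (Finset V)) (d : ℕ) : Prop :=
  ∀ s ∈ X, ∃ t ∈ faces X d, s ⊆ t

/-- `c(σ)`: the number of `d`-dimensional faces of `X` containing `σ`. -/
def cnt [DecidableEq V] (X : Finset (Finset V)) (d : ℕ) (σ : Finset V) : ℕ :=
  ((faces X d).filter fun τ => σ ⊆ τ).card

/-- The weight `w(σ) = c(σ)/(C(d+1,i+1)·|X(d)|)` of an `i`-face `σ`. -/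
noncomputable def wt [DecidableEq V] (X : Finset (Finset V)) (d i : ℕ) (σ : Finset V) : ℝ :=
  (cnt X d σ : ℝ) / ((((d + 1).choose (i + 1)) : ℝ) * ((faces X d).card : ℝ))

/-- The weighted norm of an `F₂` `i`-cochain, identified with its support. -/
noncomputable def cnorm [DecidableEq V] (X : Finset (Finset V)) (d i : ℕ)
    (α : Finset (Finset V)) : ℝ :=
  ∑ σ ∈ α, wt X d i σ

/-- The `F₂`-coboundary of an `i`-cochain `α` (identified with its support): the set of
`(i+1)`-faces containing an odd number of `i`-faces from `α`. -/
def coboundary [DecidableEq V] (X : Finset (Finset V)) (i : ℕ)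
    (α : Finset (Finset V)) : Finset (Finset V) :=
  (faces X (i + 1)).filter fun σ => ((σ.powersetCard (i + 1)).filter (· ∈ α)).card % 2 = 1

/-- The link of a vertex `v` in `X`. -/
def link [DecidableEq V] (X : Finset (Finset V)) (v : V) : Finset (Finset V) :=
  (X.filter fun s => v ∈ s).image fun s => s.erase v

/-- The localization `α_v` of a cochain `α` at the vertex `v`. -/
def loc [DecidableEq V] (α : Finset (Finset V)) (v : V) : Finset (Finset V) :=
  (α.filter fun s => v ∈ s).image fun s => s.erase v

/-- `β` is an `i`-coboundary, i.e. `β ∈ B^i(X, F₂)`; for `i = 0` these are the images of the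
reduced coboundary map `δ₋₁ : F₂ → C⁰`, namely `0` and the all-ones cochain. -/
def IsCoboundarySet [DecidableEq V] (X : Finset (Finset V)) : ℕ → Finset (Finset V) → Prop
  | 0, β => β = ∅ ∨ β = faces X 0
  | i + 1, β => ∃ γ ⊆ faces X i, β = coboundary X i γ

/-- `β` is a minimal `i`-cochain: it has minimal weighted norm in its coset mod `B^i`. -/
def IsMinimal [DecidableEq V] (X : Finset (Finset V)) (d i : ℕ)
    (β : Finset (Finset V)) : Prop :=
  ∀ γ : Finset (Finset V), IsCoboundarySet X i γ → cnorm X d i β ≤ cnorm X d i (symmDiff β γ)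

/-- `α ∈ C^i(X,F₂)` is locally minimal: for every vertex `v`, the localization `α_v` is a
minimal `(i-1)`-cochain of the link `X_v` (a pure `(d-1)`-dimensional complex). -/
def LocallyMinimal [DecidableEq V] (X : Finset (Finset V)) (d i : ℕ)
    (α : Finset (Finset V)) : Prop :=
  ∀ v : V, IsMinimal (link X v) (d - 1) (i - 1) (loc α v)


section Stmt5Aux
variable {V : Type*}

lemma s5_mem_link_iff [DecidableEq V] {X : Finset (Finset V)} {v : V} {σ : Finset V} :
    σ ∈ link X v ↔ insert v σ ∈ X ∧ v ∉ σ := by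
  constructor
  · intro h
    simp only [link, mem_image, mem_filter] at h
    obtain ⟨s, ⟨hs, hv⟩, rfl⟩ := h
    rw [Finset.insert_erase hv]
    exact ⟨hs, Finset.notMem_erase _ _⟩
  · rintro ⟨h1, h2⟩
    simp only [link, mem_image, mem_filter]
    exact ⟨insert v σ, ⟨h1, Finset.mem_insert_self _ _⟩, Finset.erase_insert h2⟩

lemma s5_link_down [DecidableEq V] {X : Finset (Finset V)} {v : V} (hcpx : IsComplex X)
    {σ τ : Finset V} (hστ : τ ⊆ σ) (hσ : σ ∈ link X v) : τ ∈ link X v := by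
  rw [s5_mem_link_iff] at *
  exact ⟨hcpx _ hσ.1 _ (Finset.insert_subset_insert v hστ), fun h => hσ.2 (hστ h)⟩

lemma s5_cnt_link [DecidableEq V] {X : Finset (Finset V)} {v : V} {d : ℕ} (hd : 1 ≤ d)
    {σ : Finset V} (hvσ : v ∉ σ) :
    cnt (link X v) (d - 1) σ = cnt X d (insert v σ) := by
  unfold cnt
  apply Finset.card_nbij' (fun τ => insert v τ) (fun τ => τ.erase v)
  · intro τ hτ
    simp only [Finset.mem_coe, mem_filter, faces, s5_mem_link_iff] at hτ ⊢
    obtain ⟨⟨⟨hX, hvτ⟩, hcard⟩, hsub⟩ := hτ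
    refine ⟨⟨hX, ?_⟩, Finset.insert_subset_insert v hsub⟩
    rw [Finset.card_insert_of_notMem hvτ, hcard]; omega
  · intro τ hτ
    simp only [Finset.mem_coe, mem_filter, faces, s5_mem_link_iff] at hτ ⊢
    obtain ⟨⟨hX, hcard⟩, hsub⟩ := hτ
    have hvτ : v ∈ τ := hsub (Finset.mem_insert_self v σ)
    rw [Finset.insert_erase hvτ]
    refine ⟨⟨⟨hX, Finset.notMem_erase _ _⟩, ?_⟩, fun x hx => Finset.mem_erase.2
      ⟨fun hxv => hvσ (hxv ▸ hx), hsub (Finset.mem_insert_of_mem hx)⟩⟩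
    rw [Finset.card_erase_of_mem hvτ, hcard]; omega
  · intro τ hτ
    simp only [Finset.mem_coe, mem_filter, faces, s5_mem_link_iff] at hτ
    exact Finset.erase_insert hτ.1.1.2
  · intro τ hτ
    simp only [Finset.mem_coe, mem_filter, faces] at hτ
    exact Finset.insert_erase (hτ.2 (Finset.mem_insert_self v σ))

lemma s5_swap [DecidableEq V] (T S : Finset (Finset V)) :
    ∑ τ ∈ T, (S.filter (fun σ => τ ⊆ σ)).card = ∑ σ ∈ S, (T.filter (fun τ => τ ⊆ σ)).card := by
  simp only [Finset.card_filter]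
  exact Finset.sum_comm

end Stmt5Aux

/-- Let `X` be a finite pure `d`-dimensional homogeneous simplicial complex
such that `c(σ)` is constant on `X(i)`. If `α ∈ C^i(X,F₂)` is locally minimal, then for every
vertex `v` the localization `α_v`, as a set of `(i-1)`-cells of the link `X_v`, satisfies
`|α_v| ≤ |X_v(i-1)|/2`. -/
theorem stmt_5 {V : Type*} [Fintype V] [DecidableEq V]
    (X : Finset (Finset V)) (d i : ℕ) (hd : 1 ≤ d) (hi : 1 ≤ i) (hid : i ≤ d)
    (hcpx : IsComplex X) (hpure : IsPure X d)
    (hvert : ∀ v : V, {v} ∈ X)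
    (hhom : ∃ m : ℕ, ∀ v : V, (faces (link X v) (d - 1)).card = m)
    (hconst : ∃ k : ℕ, ∀ σ ∈ faces X i, cnt X d σ = k)
    (α : Finset (Finset V)) (hα : α ⊆ faces X i)
    (hmin : LocallyMinimal X d i α) :
    ∀ v : V, 2 * (loc α v).card ≤ (faces (link X v) (i - 1)).card := by
  intro v
  rcases (faces X i).eq_empty_or_nonempty with hFe | ⟨σ₀, hσ₀⟩
  · rw [hFe] at hα
    rw [Finset.subset_empty.mp hα]
    simp [loc]
  obtain ⟨k, hk⟩ := hconst
  -- k is positive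
  have hkpos : 0 < k := by
    rw [← hk σ₀ hσ₀]
    obtain ⟨t, ht, hsub⟩ := hpure σ₀ (Finset.mem_filter.mp hσ₀).1
    exact Finset.card_pos.mpr ⟨t, Finset.mem_filter.mpr ⟨ht, hsub⟩⟩
  set L := link X v with hL
  set F := faces L (i - 1) with hF
  set A := loc α v with hA
  -- A ⊆ F
  have hAF : A ⊆ F := by
    intro s hs
    simp only [hA, loc, mem_image, mem_filter] at hs
    obtain ⟨t, ⟨htα, htv⟩, rfl⟩ := hs
    have ht : t ∈ faces X i := hα htα
    rw [hF]
    simp only [faces, mem_filter] at ht ⊢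
    refine ⟨s5_mem_link_iff.mpr ⟨?_, Finset.notMem_erase _ _⟩, ?_⟩
    · rw [Finset.insert_erase htv]; exact ht.1
    · rw [Finset.card_erase_of_mem htv, ht.2]; omega
  -- every element of L omits v and every element of F has `insert v ·` an i-face of X
  have hFX : ∀ σ ∈ F, insert v σ ∈ faces X i ∧ v ∉ σ := by
    intro σ hσ
    simp only [hF, faces, mem_filter] at hσ
    obtain ⟨hσL, hcard⟩ := hσ
    rw [s5_mem_link_iff] at hσL
    refine ⟨Finset.mem_filter.mpr ⟨hσL.1, ?_⟩, hσL.2⟩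
    rw [Finset.card_insert_of_notMem hσL.2, hcard]; omega
  -- the (d-1)-faces of the link are nonempty
  have hMpos : 0 < (faces L (d - 1)).card := by
    obtain ⟨t, ht, hsub⟩ := hpure {v} (hvert v)
    have htv : v ∈ t := hsub (Finset.mem_singleton_self v)
    have ht' : t ∈ X ∧ t.card = d + 1 := Finset.mem_filter.mp ht
    refine Finset.card_pos.mpr ⟨t.erase v, Finset.mem_filter.mpr ⟨?_, ?_⟩⟩
    · rw [s5_mem_link_iff, Finset.insert_erase htv]
      exact ⟨ht'.1, Finset.notMem_erase _ _⟩
    · rw [Finset.card_erase_of_mem htv, ht'.2]; omega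
  -- constant weight
  set w : ℝ := (k : ℝ) / ((d.choose i : ℝ) * ((faces L (d - 1)).card : ℝ)) with hw
  have hwpos : 0 < w := by
    apply div_pos (by exact_mod_cast hkpos)
    apply mul_pos
    · exact_mod_cast Nat.choose_pos hid
    · exact_mod_cast hMpos
  have hwt : ∀ σ ∈ F, wt L (d - 1) (i - 1) σ = w := by
    intro σ hσ
    obtain ⟨hσi, hvσ⟩ := hFX σ hσ
    unfold wt
    rw [s5_cnt_link hd hvσ, hk _ hσi]
    have h1 : d - 1 + 1 = d := by omega
    have h2 : i - 1 + 1 = i := by omega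
    rw [h1, h2, hw]
  have hcn : ∀ B ⊆ F, cnorm L (d - 1) (i - 1) B = (B.card : ℝ) * w := by
    intro B hB
    unfold cnorm
    rw [Finset.sum_congr rfl (fun σ hσ => hwt σ (hB hσ)), Finset.sum_const, nsmul_eq_mul]
  -- minimality in terms of cardinality
  have hcard_min : ∀ γ ⊆ F, IsCoboundarySet L (i - 1) γ → A.card ≤ (symmDiff A γ).card := by
    intro γ hγF hcob
    have h := hmin v γ hcob
    have hsd : symmDiff A γ ⊆ F := by
      have : symmDiff A γ ⊆ A ∪ γ := by
        rw [show symmDiff A γ = (A \ γ) ∪ (γ \ A) from rfl]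
        exact Finset.union_subset ((Finset.sdiff_subset).trans Finset.subset_union_left)
          ((Finset.sdiff_subset).trans Finset.subset_union_right)
      exact this.trans (Finset.union_subset hAF hγF)
    rw [hcn A hAF, hcn _ hsd] at h
    exact_mod_cast le_of_mul_le_mul_right h hwpos
  -- from minimality: for coboundary γ ⊆ F, 2|A ∩ γ| ≤ |γ|
  have hhalf : ∀ γ ⊆ F, IsCoboundarySet L (i - 1) γ → 2 * (A ∩ γ).card ≤ γ.card := by
    intro γ hγF hcob
    have h := hcard_min γ hγF hcob
    have hsdcard : (symmDiff A γ).card = (A \ γ).card + (γ \ A).card := by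
      rw [show symmDiff A γ = (A \ γ) ∪ (γ \ A) from rfl]
      exact Finset.card_union_of_disjoint disjoint_sdiff_sdiff
    have h1 : (A \ γ).card + (A ∩ γ).card = A.card := Finset.card_sdiff_add_card_inter A γ
    have h2 : (γ \ A).card + (γ ∩ A).card = γ.card := Finset.card_sdiff_add_card_inter γ A
    rw [Finset.inter_comm] at h2
    omega
  rcases Nat.lt_or_ge i 2 with hi2 | hi2
  · -- case i = 1
    have hione : i = 1 := by omega
    have hcobF : IsCoboundarySet L (i - 1) F := by
      rw [show i - 1 = 0 from by omega]
      exact Or.inr (by rw [hF]; congr 1; omega)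
    have := hhalf F Finset.Subset.rfl hcobF
    rwa [Finset.inter_eq_left.mpr hAF] at this
  · -- case i ≥ 2 : double counting over (i-2)-faces
    set T := faces L (i - 2) with hT
    -- each (i-1)-face of the link contains exactly i faces from T
    have hinner : ∀ σ ∈ F, (T.filter (fun τ => τ ⊆ σ)).card = i := by
      intro σ hσ
      have hσL : σ ∈ L := (Finset.mem_filter.mp hσ).1
      have hσc : σ.card = i := by
        have := (Finset.mem_filter.mp hσ).2
        omega
      have : T.filter (fun τ => τ ⊆ σ) = σ.powersetCard (i - 1) := by
        ext τ
        simp only [hT, faces, Finset.mem_filter, Finset.mem_powersetCard]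
        constructor
        · rintro ⟨⟨_, hc⟩, hsub⟩; exact ⟨hsub, by omega⟩
        · rintro ⟨hsub, hc⟩
          exact ⟨⟨s5_link_down hcpx hsub hσL, by omega⟩, hsub⟩
      rw [this, Finset.card_powersetCard, hσc]
      rw [show i - 1 = i - (i - (i-1)) from by omega,
        Nat.choose_symm (by omega), show i - (i - 1) = 1 from by omega, Nat.choose_one_right]
    -- per-τ bound
    have hτbound : ∀ τ ∈ T, 2 * (A.filter (fun σ => τ ⊆ σ)).card ≤
        (F.filter (fun σ => τ ⊆ σ)).card := by
      intro τ hτ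
      have hτc : τ.card = i - 1 := by
        have := (Finset.mem_filter.mp hτ).2
        omega
      set γ := F.filter (fun σ => τ ⊆ σ) with hγ
      have hcob : IsCoboundarySet L (i - 1) γ := by
        rw [show i - 1 = (i - 2) + 1 from by omega]
        refine ⟨{τ}, Finset.singleton_subset_iff.mpr hτ, ?_⟩
        unfold coboundary
        rw [hγ, hF, show i - 2 + 1 = i - 1 from by omega]
        apply Finset.filter_congr
        intro σ hσ
        have : (σ.powersetCard (i - 1)).filter (· ∈ ({τ} : Finset (Finset V))) =
            if τ ∈ σ.powersetCard (i - 1) then {τ} else ∅ := by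
          simp only [Finset.mem_singleton]
          exact Finset.filter_eq' _ τ
        rw [this]
        by_cases hsub : τ ⊆ σ
        · rw [if_pos (Finset.mem_powersetCard.mpr ⟨hsub, by omega⟩)]
          simp [hsub]
        · rw [if_neg (fun hmem => hsub (Finset.mem_powersetCard.mp hmem).1)]
          simp [hsub]
      have h := hhalf γ (Finset.filter_subset _ _) hcob
      have hAγ : A ∩ γ = A.filter (fun σ => τ ⊆ σ) := by
        ext σ
        simp only [Finset.mem_inter, hγ, Finset.mem_filter]
        constructor
        · rintro ⟨h1, _, h3⟩; exact ⟨h1, h3⟩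
        · rintro ⟨h1, h2⟩; exact ⟨h1, hAF h1, h2⟩
      rwa [hAγ] at h
    -- sum over τ ∈ T
    have hsum : ∑ τ ∈ T, 2 * (A.filter (fun σ => τ ⊆ σ)).card ≤
        ∑ τ ∈ T, (F.filter (fun σ => τ ⊆ σ)).card :=
      Finset.sum_le_sum hτbound
    rw [← Finset.mul_sum, s5_swap T A, s5_swap T F] at hsum
    rw [Finset.sum_congr rfl (fun σ hσ => hinner σ (hAF hσ)),
      Finset.sum_congr rfl hinner, Finset.sum_const, Finset.sum_const,
      smul_eq_mul, smul_eq_mul] at hsum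
    have hipos : 0 < i := hi
    calc 2 * A.card = (2 * (A.card * i)) / i := by
          rw [← mul_assoc, Nat.mul_div_cancel _ hipos]
      _ ≤ (F.card * i) / i := Nat.div_le_div_right hsum
      _ = F.card := Nat.mul_div_cancel _ hipos
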